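/- Let a > 0, let f, g : [-a,a] → ℝ be odd continuous functions, let M > 0, and let 0 ≤ ρ < min{M/2, 1/(4a(FM + G))}. Then there exists a continuous even function x : [-a,a] → ℝ with ‖x‖_∞ ≤ M such that x(t) = ρ / (1 − ρ ∫_{-a}^t (f(s)x(s) + g(s)) ds) for all t ∈ [-a,a]; in particular x is a solution of the Abel equation x'(t) = f(t)x(t)^3 + g(t)x(t)^2 with x(-a) = ρ, and it is closed, i.e., x(a) = x(-a). -/

import Mathlib

set_option maxHeartbeats 2000000

open MeasureTheory Set Filter BoundedContinuousFunction

/-- If `f, g` are odd continuous functions on `[-a,a]`, `M > 0` and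
`0 ≤ ρ < min{M/2, 1/(4a(FM+G))}` (with `F = max |f|`, `G = max |g|`), then there is a
continuous even function `x` on `[-a,a]` with `‖x‖_∞ ≤ M` which is a fixed point of the
integral operator, i.e. `x t = ρ / (1 - ρ ∫_{-a}^t (f x + g))`; in particular `x` solves
the Abel equation `x' = f x³ + g x²`, satisfies `x(-a) = ρ`, and is closed: `x a = x (-a)`. -/
theorem exists_closed_even_solution
    (a ρ M F G : ℝ) (ha : 0 < a) (hM : 0 < M) (f g : ℝ → ℝ)
    (hf : ContinuousOn f (Set.Icc (-a) a)) (hg : ContinuousOn g (Set.Icc (-a) a))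
    (hfodd : ∀ t ∈ Set.Icc (-a) a, f (-t) = -f t)
    (hgodd : ∀ t ∈ Set.Icc (-a) a, g (-t) = -g t)
    (hF : IsGreatest ((fun t => |f t|) '' Set.Icc (-a) a) F)
    (hG : IsGreatest ((fun t => |g t|) '' Set.Icc (-a) a) G)
    (hρ0 : 0 ≤ ρ) (hρ : ρ < min (M / 2) (1 / (4 * a * (F * M + G)))) :
    ∃ x : ℝ → ℝ, ContinuousOn x (Set.Icc (-a) a) ∧
      (∀ t ∈ Set.Icc (-a) a, x (-t) = x t) ∧
      (∀ t ∈ Set.Icc (-a) a, |x t| ≤ M) ∧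
      (∀ t ∈ Set.Icc (-a) a,
        x t = ρ / (1 - ρ * ∫ s in (-a)..t, (f s * x s + g s))) ∧
      (∀ t ∈ Set.Icc (-a) a,
        HasDerivWithinAt x (f t * x t ^ 3 + g t * x t ^ 2) (Set.Icc (-a) a) t) ∧
      x (-a) = ρ ∧ x a = x (-a) := by
  obtain ⟨hρ1, hρ2⟩ := lt_min_iff.mp hρ
  have hle : -a ≤ a := by linarith
  obtain ⟨⟨t0, ht0, hFt0⟩, hFub⟩ := hF
  have hF0 : 0 ≤ F := hFt0 ▸ abs_nonneg _
  obtain ⟨⟨t1, ht1, hGt1⟩, hGub⟩ := hG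
  have hG0 : 0 ≤ G := hGt1 ▸ abs_nonneg _
  have hFM : 0 < F * M + G := by
    rcases lt_or_eq_of_le (by positivity : (0:ℝ) ≤ F * M + G) with h | h
    · exact h
    · exfalso
      rw [← h, mul_zero, div_zero] at hρ2
      linarith
  have h4a : 0 < 4 * a * (F * M + G) := by positivity
  have hρ4 : ρ * (4 * a * (F * M + G)) < 1 := by
    have := (lt_div_iff₀ h4a).mp hρ2
    linarith
  -- the projection onto [-a, a]
  set π : ℝ → ℝ := fun t => max (-a) (min a t) with hπdef
  have hπcont : Continuous π := continuous_const.max (continuous_const.min continuous_id)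
  have hπmem : ∀ t, π t ∈ Set.Icc (-a) a :=
    fun t => ⟨le_max_left _ _, max_le hle (min_le_left _ _)⟩
  have hπid : ∀ t ∈ Set.Icc (-a) a, π t = t := by
    intro t ht
    simp only [hπdef]
    rw [min_eq_right ht.2, max_eq_right ht.1]
  have hπneg : ∀ t, π (-t) = -π t := by
    intro t
    simp only [hπdef]
    rcases le_total t (-a) with h | h
    · rw [min_eq_left (by linarith), max_eq_right hle, min_eq_right (by linarith),
        max_eq_left h, neg_neg]
    · rcases le_total t a with h' | h'
      · rw [min_eq_right (by linarith), max_eq_right (by linarith), min_eq_right h',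
          max_eq_right h]
      · rw [min_eq_right (by linarith), max_eq_left (by linarith), min_eq_left h',
          max_eq_right hle]
  -- clamping at level M
  set cM : ℝ → ℝ := fun u => max (-M) (min M u) with hcMdef
  have hcMcont : Continuous cM := continuous_const.max (continuous_const.min continuous_id)
  have hcMbd : ∀ u, |cM u| ≤ M := by
    intro u
    rw [abs_le]
    exact ⟨le_max_left _ _, max_le (by linarith) (min_le_left _ _)⟩
  have hcMlip : ∀ u v : ℝ, |cM u - cM v| ≤ |u - v| := by
    intro u v
    have h1 : |min M u - min M v| ≤ |u - v| := by
      simpa using abs_min_sub_min_le_max M u M v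
    calc |cM u - cM v| = |max (min M u) (-M) - max (min M v) (-M)| := by
          simp only [hcMdef]
          rw [max_comm (-M) (min M u), max_comm (-M) (min M v)]
      _ ≤ |min M u - min M v| := abs_max_sub_max_le_abs _ _ _
      _ ≤ |u - v| := h1
  have hcMeq : ∀ u : ℝ, |u| ≤ M → cM u = u := by
    intro u hu
    rw [abs_le] at hu
    simp only [hcMdef]
    rw [min_eq_right hu.2, max_eq_right hu.1]
  -- globalized odd extensions of f and g
  set f1 : ℝ → ℝ := fun s => f (π s) with hf1def
  set g1 : ℝ → ℝ := fun s => g (π s) with hg1def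
  have hf1c : Continuous f1 := hf.comp_continuous hπcont hπmem
  have hg1c : Continuous g1 := hg.comp_continuous hπcont hπmem
  have hf1b : ∀ s, |f1 s| ≤ F := fun s => hFub ⟨π s, hπmem s, rfl⟩
  have hg1b : ∀ s, |g1 s| ≤ G := fun s => hGub ⟨π s, hπmem s, rfl⟩
  have hf1eq : ∀ s ∈ Set.Icc (-a) a, f1 s = f s := fun s hs => by
    simp only [hf1def]; rw [hπid s hs]
  have hg1eq : ∀ s ∈ Set.Icc (-a) a, g1 s = g s := fun s hs => by
    simp only [hg1def]; rw [hπid s hs]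
  have hf1o : ∀ s, f1 (-s) = -f1 s := by
    intro s
    simp only [hf1def]
    rw [hπneg]
    exact hfodd _ (hπmem s)
  have hg1o : ∀ s, g1 (-s) = -g1 s := by
    intro s
    simp only [hg1def]
    rw [hπneg]
    exact hgodd _ (hπmem s)
  -- the integrand and primitive
  set ψ : (ℝ →ᵇ ℝ) → ℝ → ℝ := fun x s => f1 s * cM (x s) + g1 s with hψdef
  have hψc : ∀ x, Continuous (ψ x) :=
    fun x => (hf1c.mul (hcMcont.comp x.continuous)).add hg1c
  have hψb : ∀ x s, |ψ x s| ≤ F * M + G := by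
    intro x s
    calc |f1 s * cM (x s) + g1 s| ≤ |f1 s * cM (x s)| + |g1 s| := abs_add_le _ _
      _ = |f1 s| * |cM (x s)| + |g1 s| := by rw [abs_mul]
      _ ≤ F * M + G := by
          have := hf1b s; have := hg1b s; have := hcMbd (x s)
          have h1 : |f1 s| * |cM (x s)| ≤ F * M :=
            mul_le_mul (hf1b s) (hcMbd (x s)) (abs_nonneg _) hF0
          linarith
  set Φ : (ℝ →ᵇ ℝ) → ℝ → ℝ := fun x u => ∫ s in (-a)..u, ψ x s with hΦdef
  have hΦc : ∀ x, Continuous (Φ x) := by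
    intro x
    have := intervalIntegral.continuous_primitive (μ := volume) (f := ψ x)
      (fun u v => (hψc x).intervalIntegrable u v) (-a)
    simpa only [hΦdef] using this
  have hΦbd : ∀ x (c : ℝ), c ∈ Set.Icc (-a) a → |Φ x c| ≤ 2 * a * (F * M + G) := by
    intro x c hc
    have h1 : |Φ x c| ≤ (F * M + G) * |c - (-a)| := by
      simp only [hΦdef]
      rw [← Real.norm_eq_abs]
      exact intervalIntegral.norm_integral_le_of_norm_le_const fun s _ =>
        (Real.norm_eq_abs _).trans_le (hψb x s)
    have h2 : |c - (-a)| ≤ 2 * a := by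
      rw [abs_le]
      constructor <;> [linarith [hc.1]; linarith [hc.2]]
    calc |Φ x c| ≤ (F * M + G) * |c - (-a)| := h1
      _ ≤ (F * M + G) * (2 * a) := by
          exact mul_le_mul_of_nonneg_left h2 (le_of_lt hFM)
      _ = 2 * a * (F * M + G) := by ring
  have hD : ∀ x (t : ℝ), (1:ℝ)/2 < 1 - ρ * Φ x (π t) := by
    intro x t
    have h1 := hΦbd x (π t) (hπmem t)
    have h2 : ρ * Φ x (π t) ≤ ρ * |Φ x (π t)| :=
      mul_le_mul_of_nonneg_left (le_abs_self _) hρ0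
    have h3 : ρ * |Φ x (π t)| ≤ ρ * (2 * a * (F * M + G)) :=
      mul_le_mul_of_nonneg_left h1 hρ0
    nlinarith
  have hDne : ∀ x (t : ℝ), (1 - ρ * Φ x (π t)) ≠ 0 :=
    fun x t => by have := hD x t; positivity
  -- the operator T
  have hTc : ∀ x : ℝ →ᵇ ℝ, Continuous fun t => ρ / (1 - ρ * Φ x (π t)) := by
    intro x
    exact continuous_const.div
      (continuous_const.sub (continuous_const.mul ((hΦc x).comp hπcont))) (hDne x)
  have hTb : ∀ (x : ℝ →ᵇ ℝ) (t : ℝ), ‖ρ / (1 - ρ * Φ x (π t))‖ ≤ 2 * ρ := by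
    intro x t
    have h1 := hD x t
    rw [Real.norm_eq_abs, abs_div, abs_of_nonneg hρ0, abs_of_pos (by linarith : (0:ℝ) < 1 - ρ * Φ x (π t))]
    rw [div_le_iff₀ (by linarith)]
    nlinarith
  set T : (ℝ →ᵇ ℝ) → (ℝ →ᵇ ℝ) := fun x =>
    BoundedContinuousFunction.ofNormedAddCommGroup
      (fun t => ρ / (1 - ρ * Φ x (π t))) (hTc x) (2 * ρ) (hTb x) with hTdef
  have hTapp : ∀ (x : ℝ →ᵇ ℝ) (t : ℝ), T x t = ρ / (1 - ρ * Φ x (π t)) := fun x t => rfl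
  -- contraction estimate
  have hΦlip : ∀ (x y : ℝ →ᵇ ℝ) (t : ℝ),
      |Φ x (π t) - Φ y (π t)| ≤ 2 * a * (F * dist x y) := by
    intro x y t
    have hix : IntervalIntegrable (ψ x) volume (-a) (π t) := (hψc x).intervalIntegrable _ _
    have hiy : IntervalIntegrable (ψ y) volume (-a) (π t) := (hψc y).intervalIntegrable _ _
    have hsub : Φ x (π t) - Φ y (π t) = ∫ s in (-a)..(π t), (ψ x s - ψ y s) := by
      simp only [hΦdef]
      rw [intervalIntegral.integral_sub hix hiy]
    have hbd : ∀ s ∈ Set.uIoc (-a) (π t), ‖ψ x s - ψ y s‖ ≤ F * dist x y := by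
      intro s _
      have h1 : ψ x s - ψ y s = f1 s * (cM (x s) - cM (y s)) := by
        simp only [hψdef]; ring
      rw [Real.norm_eq_abs, h1, abs_mul]
      have h2 : |cM (x s) - cM (y s)| ≤ |x s - y s| := hcMlip _ _
      have h3 : |x s - y s| ≤ dist x y := by
        rw [← Real.dist_eq]
        exact BoundedContinuousFunction.dist_coe_le_dist s
      exact mul_le_mul (hf1b s) (h2.trans h3) (abs_nonneg _) hF0
    have h4 : |Φ x (π t) - Φ y (π t)| ≤ (F * dist x y) * |π t - (-a)| := by
      rw [hsub, ← Real.norm_eq_abs]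
      exact intervalIntegral.norm_integral_le_of_norm_le_const hbd
    have h5 : |π t - (-a)| ≤ 2 * a := by
      have := hπmem t
      rw [abs_le]
      constructor <;> [linarith [this.1]; linarith [this.2]]
    calc |Φ x (π t) - Φ y (π t)| ≤ (F * dist x y) * |π t - (-a)| := h4
      _ ≤ (F * dist x y) * (2 * a) := by
          exact mul_le_mul_of_nonneg_left h5 (by positivity)
      _ = 2 * a * (F * dist x y) := by ring
  have hK1 : 8 * a * F * ρ ^ 2 < 1 := by
    nlinarith [mul_nonneg (mul_nonneg ha.le hF0) hρ0, mul_nonneg (mul_nonneg ha.le hG0) hρ0,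
      mul_le_mul_of_nonneg_left hρ1.le (mul_nonneg (mul_nonneg ha.le hF0) hρ0)]
  set K : NNReal := ⟨8 * a * F * ρ ^ 2, by positivity⟩ with hKdef
  have hKcoe : (K : ℝ) = 8 * a * F * ρ ^ 2 := rfl
  have hTlip : ∀ x y : ℝ →ᵇ ℝ, dist (T x) (T y) ≤ (K : ℝ) * dist x y := by
    intro x y
    rw [BoundedContinuousFunction.dist_le (by positivity)]
    intro t
    have hdx := hD x t
    have hdy := hD y t
    have hΔ := hΦlip x y t
    rw [hTapp, hTapp, Real.dist_eq]
    have e1 : ρ / (1 - ρ * Φ x (π t)) - ρ / (1 - ρ * Φ y (π t)) =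
        ρ * ρ * (Φ x (π t) - Φ y (π t)) /
          ((1 - ρ * Φ x (π t)) * (1 - ρ * Φ y (π t))) := by
      field_simp
      ring
    rw [e1, abs_div, abs_mul, abs_mul, abs_of_nonneg hρ0, abs_mul,
      abs_of_pos (by linarith : (0:ℝ) < 1 - ρ * Φ x (π t)),
      abs_of_pos (by linarith : (0:ℝ) < 1 - ρ * Φ y (π t))]
    rw [div_le_iff₀ (by nlinarith)]
    have hd0 : 0 ≤ dist x y := dist_nonneg
    have habs : |Φ x (π t) - Φ y (π t)| ≤ 2 * a * (F * dist x y) := hΔ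
    rw [hKcoe]
    have h8 : 0 ≤ 8 * a * F * ρ ^ 2 * dist x y := by positivity
    have hprod : (1:ℝ)/4 ≤ (1 - ρ * Φ x (π t)) * (1 - ρ * Φ y (π t)) := by nlinarith
    nlinarith [mul_le_mul_of_nonneg_left habs (mul_nonneg hρ0 hρ0),
      mul_le_mul_of_nonneg_left hprod h8]
  have hCW : ContractingWith K T := by
    constructor
    · rw [← NNReal.coe_lt_coe, hKcoe, NNReal.coe_one]
      exact hK1
    · exact LipschitzWith.of_dist_le_mul hTlip
  -- the fixed point
  set X : ℝ →ᵇ ℝ := ContractingWith.fixedPoint T hCW with hXdef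
  have hfix : T X = X := hCW.fixedPoint_isFixedPt
  -- evenness
  have hTeven : ∀ x : ℝ →ᵇ ℝ, (∀ t, x (-t) = x t) → ∀ t, T x (-t) = T x t := by
    intro x hx t
    have hψodd : ∀ s, ψ x (-s) = -ψ x s := by
      intro s
      simp only [hψdef]
      rw [hf1o, hg1o, hx]
      ring
    have key : (∫ s in (π t)..(-(π t)), ψ x s) = 0 := by
      have h1 : (∫ s in (π t)..(-(π t)), ψ x (-s)) = ∫ s in (π t)..(-(π t)), ψ x s := by
        rw [intervalIntegral.integral_comp_neg, neg_neg]
      have h2 : (∫ s in (π t)..(-(π t)), ψ x (-s)) = -∫ s in (π t)..(-(π t)), ψ x s := by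
        simp_rw [hψodd]
        exact intervalIntegral.integral_neg
      linarith [h1.symm.trans h2]
    have hΦeven : Φ x (π (-t)) = Φ x (π t) := by
      rw [hπneg]
      have hadd := intervalIntegral.integral_add_adjacent_intervals
        ((hψc x).intervalIntegrable (μ := volume) (-a) (π t))
        ((hψc x).intervalIntegrable (μ := volume) (π t) (-(π t)))
      simp only [hΦdef]
      rw [← hadd, key, add_zero]
    rw [hTapp, hTapp, hΦeven]
  have hXeven : ∀ t, X (-t) = X t := by
    have hs : IsClosed {y : ℝ →ᵇ ℝ | ∀ t, y (-t) = y t} := by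
      have hset : {y : ℝ →ᵇ ℝ | ∀ t, y (-t) = y t} = ⋂ t : ℝ, {y | y (-t) = y t} := by
        ext y
        simp [Set.mem_iInter]
      rw [hset]
      exact isClosed_iInter fun t => isClosed_eq
        (continuous_eval_const (-t))
        (continuous_eval_const t)
    set y0 : ℝ →ᵇ ℝ := BoundedContinuousFunction.const ℝ ρ with hy0
    have hiter : ∀ n : ℕ, ∀ t, (T^[n] y0) (-t) = (T^[n] y0) t := by
      intro n
      induction n with
      | zero => intro t; rfl
      | succ n ih =>
        rw [Function.iterate_succ_apply']
        exact hTeven _ ih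
    have htend := hCW.tendsto_iterate_fixedPoint y0
    exact hs.mem_of_tendsto htend (Filter.Eventually.of_forall hiter)
  -- fixed point equation and bounds
  have hXval : ∀ t, X t = ρ / (1 - ρ * Φ X (π t)) := by
    intro t
    have h := hTapp X t
    rw [show T X = X from hfix] at h
    exact h
  have hXbd : ∀ t, |X t| ≤ 2 * ρ := by
    intro t
    have h := hTb X t
    rw [Real.norm_eq_abs] at h
    rw [hXval t]
    exact h
  have hXM : ∀ t, |X t| ≤ M := fun t => by linarith [hXbd t]
  have hcMX : ∀ s, cM (X s) = X s := fun s => hcMeq _ (by linarith [hXbd s])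
  have hψX : ∀ s ∈ Set.Icc (-a) a, ψ X s = f s * X s + g s := by
    intro s hs
    simp only [hψdef]
    rw [hcMX, hf1eq s hs, hg1eq s hs]
  -- identification of the integral on [-a,a]
  have hint : ∀ t ∈ Set.Icc (-a) a,
      (∫ s in (-a)..t, (f s * X s + g s)) = Φ X t := by
    intro t ht
    have hsub : Set.uIcc (-a) t ⊆ Set.Icc (-a) a := by
      rw [Set.uIcc_of_le ht.1]
      exact Set.Icc_subset_Icc le_rfl ht.2
    simp only [hΦdef]
    exact (intervalIntegral.integral_congr fun s hs => (hψX s (hsub hs)).symm)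
  refine ⟨⇑X, X.continuous.continuousOn, fun t _ => hXeven t, fun t _ => hXM t, ?_, ?_, ?_, ?_⟩
  · -- fixed point equation
    intro t ht
    rw [hXval t, hπid t ht, hint t ht]
  · -- derivative
    intro t ht
    have hψXc : Continuous (ψ X) := hψc X
    have hP : HasDerivAt (Φ X) (ψ X t) t := by
      simp only [hΦdef]
      exact intervalIntegral.integral_hasDerivAt_right
        (hψXc.intervalIntegrable _ _)
        (hψXc.stronglyMeasurableAtFilter volume (nhds t))
        hψXc.continuousAt
    have hDt : (1 - ρ * Φ X t) ≠ 0 := by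
      have := hDne X t
      rwa [hπid t ht] at this
    have hDpos : (0:ℝ) < 1 - ρ * Φ X t := by
      have := hD X t
      rw [hπid t ht] at this
      linarith
    have hden : HasDerivAt (fun u => 1 - ρ * Φ X u) (-(ρ * ψ X t)) t :=
      (hP.const_mul ρ).const_sub 1
    have hq : HasDerivAt (fun u => ρ / (1 - ρ * Φ X u))
        ((0 * (1 - ρ * Φ X t) - ρ * -(ρ * ψ X t)) / (1 - ρ * Φ X t) ^ 2) t :=
      (hasDerivAt_const t ρ).div hden hDt
    have hXt : X t = ρ / (1 - ρ * Φ X t) := by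
      have := hXval t
      rwa [hπid t ht] at this
    have hval : (0 * (1 - ρ * Φ X t) - ρ * -(ρ * ψ X t)) / (1 - ρ * Φ X t) ^ 2 =
        f t * X t ^ 3 + g t * X t ^ 2 := by
      rw [hψX t ht, hXt]
      field_simp
      ring
    have hgoal : HasDerivWithinAt (fun u => ρ / (1 - ρ * Φ X u))
        (f t * X t ^ 3 + g t * X t ^ 2) (Set.Icc (-a) a) t := by
      rw [← hval]
      exact hq.hasDerivWithinAt
    refine hgoal.congr ?_ ?_
    · intro s hs
      have := hXval s
      rwa [hπid s hs] at this
    · exact hXt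
  · -- x(-a) = ρ
    have h := hXval (-a)
    rw [hπid (-a) (Set.left_mem_Icc.mpr hle)] at h
    have h0 : Φ X (-a) = 0 := by
      simp only [hΦdef]
      exact intervalIntegral.integral_same
    rw [h, h0, mul_zero, sub_zero, div_one]
  · -- closed
    exact (hXeven a).symm
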